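/- Let f be a monotone submodular function with f(∅)=0 and curvature c_f < 1, ε ∈ (0,1), ℓ(S) = (1-ε/2)·∑_{e∈S}(f(E)-f(E\{e})), and g = f - ℓ. Then the curvature of g satisfies c_g ≤ 1 - ε(1-c_f)/2. -/

import Mathlib

open Finset

theorem curvature_of_g_bound
    {E : Type*} [Fintype E] [DecidableEq E] [Nonempty E]
    (f : Finset E → ℝ)
    (hmono : ∀ S T : Finset E, S ⊆ T → f S ≤ f T)
    (hsub : ∀ S T : Finset E, f S + f T ≥ f (S ∩ T) + f (S ∪ T))
    (hempty : f ∅ = 0)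
    (hpos : ∀ e : E, 0 < f {e})
    (ε : ℝ) (hε : ε ∈ Set.Ioo (0:ℝ) 1)
    (ℓ g : Finset E → ℝ)
    (hℓ : ∀ S : Finset E,
      ℓ S = (1 - ε/2) * ∑ e ∈ S, (f Finset.univ - f (Finset.univ.erase e)))
    (hg : ∀ S : Finset E, g S = f S - ℓ S)
    (hgpos : ∀ e : E, 0 < g {e})
    (cf cg : ℝ)
    (hcf : cf = 1 - Finset.univ.inf' Finset.univ_nonempty
      (fun e => (f Finset.univ - f (Finset.univ.erase e)) / f {e}))
    (hcf1 : cf < 1)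
    (hcg : cg = 1 - Finset.univ.inf' Finset.univ_nonempty
      (fun e => (g Finset.univ - g (Finset.univ.erase e)) / g {e})) :
    cg ≤ 1 - ε * (1 - cf) / 2 := by
  obtain ⟨hε0, hε1⟩ := hε
  have key : ∀ e : E, ε * (1 - cf) / 2 ≤
      (g Finset.univ - g (Finset.univ.erase e)) / g {e} := by
    intro e
    have ha : 0 ≤ f Finset.univ - f (Finset.univ.erase e) :=
      sub_nonneg.2 (hmono _ _ (erase_subset _ _))
    set a := f Finset.univ - f (Finset.univ.erase e) with hadef
    have hsum : ∑ x ∈ (Finset.univ.erase e), (f Finset.univ - f (Finset.univ.erase x)) + a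
        = ∑ x ∈ Finset.univ, (f Finset.univ - f (Finset.univ.erase x)) :=
      Finset.sum_erase_add _ _ (mem_univ e)
    have hgu : g Finset.univ - g (Finset.univ.erase e) = ε/2 * a := by
      rw [hg, hg, hℓ, hℓ]
      have : a = f Finset.univ - f (Finset.univ.erase e) := hadef
      nlinarith [hsum]
    have hge : g {e} = f {e} - (1 - ε/2) * a := by
      rw [hg, hℓ, Finset.sum_singleton]
    have hgle : g {e} ≤ f {e} := by nlinarith
    have hgp : 0 < g {e} := hgpos e
    have h1 : (1 - cf) ≤ a / f {e} := by
      have := Finset.inf'_le (b := e)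
        (fun e => (f Finset.univ - f (Finset.univ.erase e)) / f {e}) (mem_univ e)
      rw [hcf]; linarith
    have h2 : a / f {e} ≤ a / g {e} :=
      div_le_div_of_nonneg_left ha hgp hgle
    have h3 : ε * (1 - cf) / 2 ≤ ε/2 * (a / g {e}) := by
      have : 0 ≤ ε/2 := by linarith
      nlinarith
    rw [hgu]
    calc ε * (1 - cf) / 2 ≤ ε/2 * (a / g {e}) := h3
      _ = ε/2 * a / g {e} := by ring
  have hinf := Finset.le_inf' Finset.univ_nonempty
    (fun e => (g Finset.univ - g (Finset.univ.erase e)) / g {e})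
    (fun e _ => key e)
  rw [hcg]
  linarith
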